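/- For every commutative K-algebra R and every ring homomorphism h : A → R, there exist a commutative R-algebra R̃ with structure homomorphism φ : R → R̃ which is faithfully flat and of finite presentation over R, and a ring homomorphism y : A → R̃, such that y(a)^p = φ(h(a)) for every a ∈ A. (That is, fppf-locally on R, every R-point of A lifts along the Frobenius a ↦ a^p.) -/

import Mathlib

universe u

open Polynomial in
lemma roots_cover_aux (p : ℕ) (hp : p ≠ 0) : ∀ (n : ℕ) (R : Type u) (_ : CommRing R)
    (c : Fin n → R),
    ∃ (Rt : Type u) (_ : CommRing Rt) (_ : Algebra R Rt),
      Module.FaithfullyFlat R Rt ∧ Algebra.FinitePresentation R Rt ∧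
      ∃ t : Fin n → Rt, ∀ i, t i ^ p = algebraMap R Rt (c i) := by
  intro n
  induction n with
  | zero =>
    intro R _ c
    exact ⟨R, ‹_›, Algebra.id R, inferInstance, inferInstance, Fin.elim0, fun i => i.elim0⟩
  | succ n ih =>
    intro R _ c
    set q : R[X] := X ^ p - C (c 0) with hq
    have hqmonic : q.Monic := monic_X_pow_sub_C _ hp
    set S := AdjoinRoot q
    -- S is finite free over R
    haveI : Module.Free R S := Module.Free.of_basis (AdjoinRoot.powerBasis' hqmonic).basis
    haveI hffRS : Module.FaithfullyFlat R S := by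
      rcases subsingleton_or_nontrivial R with hR | hR
      · refine ⟨?_⟩
        intro m hm
        exfalso
        exact hm.ne_top (Ideal.eq_top_iff_one _ |>.2 (by
          have : (1 : R) = 0 := Subsingleton.elim _ _
          rw [this]; exact m.zero_mem))
      · have hdim : (AdjoinRoot.powerBasis' hqmonic).dim = p := by
          show q.natDegree = p
          rw [hq]; exact natDegree_X_pow_sub_C
        haveI : Nontrivial S := by
          refine nontrivial_of_ne ((AdjoinRoot.powerBasis' hqmonic).basis ⟨0, ?_⟩) 0
            ((AdjoinRoot.powerBasis' hqmonic).basis.ne_zero _)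
          · rw [hdim]; exact Nat.pos_of_ne_zero hp
        infer_instance
    haveI hfpRS : Algebra.FinitePresentation R S := by
      have : Ideal.FG (Ideal.span {q} : Ideal R[X]) := ⟨{q}, by simp⟩
      exact Algebra.FinitePresentation.quotient this
    -- root of q
    have hroot : (AdjoinRoot.root q) ^ p = algebraMap R S (c 0) := by
      have h0 := AdjoinRoot.eval₂_root q
      rw [hq] at h0
      simp only [eval₂_sub, eval₂_pow, eval₂_X, eval₂_C] at h0
      rw [AdjoinRoot.algebraMap_eq]
      exact sub_eq_zero.mp h0
    -- apply induction hypothesis over S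
    obtain ⟨Rt, _, _, hffSRt, hfpSRt, t', ht'⟩ :=
      ih S inferInstance (fun i => algebraMap R S (c i.succ))
    letI : Algebra R Rt := ((algebraMap S Rt).comp (algebraMap R S)).toAlgebra
    haveI : IsScalarTower R S Rt := IsScalarTower.of_algebraMap_eq' rfl
    haveI : Module.FaithfullyFlat R Rt := Module.FaithfullyFlat.trans R S Rt
    haveI : Algebra.FinitePresentation R Rt := Algebra.FinitePresentation.trans R S Rt
    refine ⟨Rt, inferInstance, inferInstance, inferInstance, inferInstance, ?_⟩
    refine ⟨fun i => Fin.cases (algebraMap S Rt (AdjoinRoot.root q)) t' i, ?_⟩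
    intro i
    refine Fin.cases ?_ ?_ i
    · simp only [Fin.cases_zero]
      rw [← map_pow, hroot, ← IsScalarTower.algebraMap_apply]
    · intro j
      simp only [Fin.cases_succ]
      rw [ht' j, ← IsScalarTower.algebraMap_apply]

theorem stmt_14 {K A : Type u} [Field K] [IsAlgClosed K]
    (p : ℕ) [CharP K p] [NeZero p]
    [CommRing A] [Algebra K A] [Algebra.Smooth K A]
    (R : Type u) [CommRing R] [Algebra K R] (h : A →+* R) :
    ∃ (Rt : Type u) (_ : CommRing Rt) (_ : Algebra R Rt),
      Module.FaithfullyFlat R Rt ∧ Algebra.FinitePresentation R Rt ∧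
      ∃ y : A →+* Rt, ∀ a : A, y a ^ p = algebraMap R Rt (h a) := by
  classical
  have hp : p.Prime := (CharP.char_is_prime_or_zero K p).resolve_right (NeZero.ne p)
  haveI : Fact p.Prime := ⟨hp⟩
  haveI : ExpChar K p := ExpChar.prime hp
  haveI : Algebra.FinitePresentation K A := Algebra.Smooth.finitePresentation
  haveI : Algebra.FormallySmooth K A := Algebra.Smooth.formallySmooth
  obtain ⟨n, f, hfsurj, hfker⟩ := ‹Algebra.FinitePresentation K A›.out
  -- fppf cover adjoining p-th roots of the images of the generators
  obtain ⟨Rt, _, _, hff, hfp, t, ht⟩ :=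
    roots_cover_aux p hp.ne_zero n R ‹_› (fun i => h (f (MvPolynomial.X i)))
  refine ⟨Rt, ‹_›, ‹_›, hff, hfp, ?_⟩
  rcases subsingleton_or_nontrivial Rt with hRt | hRt
  · refine ⟨⟨⟨⟨fun _ => 0, Subsingleton.elim _ _⟩, fun _ _ => Subsingleton.elim _ _⟩,
      Subsingleton.elim _ _, fun _ _ => Subsingleton.elim _ _⟩, fun a => Subsingleton.elim _ _⟩
  · -- Rt has characteristic p
    have hp0 : (p : Rt) = 0 := by
      have := map_natCast ((algebraMap R Rt).comp (algebraMap K R)) p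
      rw [← this, CharP.cast_eq_zero K p, map_zero]
    have hrc : ringChar Rt = p := by
      rcases hp.eq_one_or_self_of_dvd _ (ringChar.dvd hp0) with h1 | h1
      · exact absurd h1 CharP.ringChar_ne_one
      · exact h1
    haveI : CharP Rt p := hrc ▸ ringChar.charP Rt
    haveI : ExpChar Rt p := ExpChar.prime hp
    set σ : K →+* K := (frobeniusEquiv K p).symm.toRingHom with hσ
    set φ : R →+* Rt := algebraMap R Rt
    set jmap : K →+* Rt := (φ.comp (h.comp ((algebraMap K A).comp σ))) with hjmap
    set Θ : MvPolynomial (Fin n) K →+* Rt := MvPolynomial.eval₂Hom jmap t with hΘ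
    have hkey : (frobenius Rt p).comp Θ = (φ.comp h).comp f.toRingHom := by
      apply MvPolynomial.ringHom_ext
      · intro c
        have h1 : Θ (MvPolynomial.C c) = jmap c := by simp [hΘ]
        have h2 : (σ c) ^ p = c := by
          have h2' := (frobeniusEquiv K p).apply_symm_apply c
          rw [frobeniusEquiv_def] at h2'
          exact h2'
        have h3 : f (MvPolynomial.C c) = algebraMap K A c := f.commutes c
        simp only [RingHom.comp_apply, AlgHom.toRingHom_eq_coe, RingHom.coe_coe, h1, h3]
        rw [frobenius_def, hjmap]
        simp only [RingHom.comp_apply, RingHom.coe_coe]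
        rw [← map_pow, ← map_pow, ← map_pow, h2]
      · intro i
        have h1 : Θ (MvPolynomial.X i) = t i := by simp [hΘ]
        simp only [RingHom.comp_apply, AlgHom.toRingHom_eq_coe, RingHom.coe_coe, h1]
        rw [frobenius_def]
        exact ht i
    -- the ideal generated by the images of the relations is nilpotent
    set J : Ideal Rt := (RingHom.ker f.toRingHom).map Θ with hJ
    have hkerle : RingHom.ker f.toRingHom ≤ RingHom.ker ((φ.comp h).comp f.toRingHom) := by
      intro g hg
      simp only [RingHom.mem_ker] at hg ⊢
      show φ (h (f g)) = 0
      rw [show (f g : A) = 0 from hg, map_zero, map_zero]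
    have hmapfrob : J.map (frobenius Rt p) = ⊥ := by
      rw [hJ, Ideal.map_map, hkey]
      rw [← le_bot_iff, Ideal.map_le_iff_le_comap]
      intro g hg
      simpa [Ideal.mem_comap, RingHom.mem_ker] using hkerle hg
    have hpzero : ∀ u ∈ J, u ^ p = 0 := by
      intro u hu
      have : (frobenius Rt p) u ∈ J.map (frobenius Rt p) := Ideal.mem_map_of_mem _ hu
      rw [hmapfrob] at this
      simpa [frobenius_def] using this
    have hJnil : IsNilpotent J := by
      have hJfg : J.FG := hfker.map Θ
      have hle : J ≤ Ideal.radical ⊥ := by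
        intro u hu
        exact Ideal.mem_radical_iff.2 ⟨p, by simpa using hpzero u hu⟩
      obtain ⟨k, hk⟩ := Ideal.exists_pow_le_of_le_radical_of_fg hle hJfg
      exact ⟨k, le_bot_iff.mp hk⟩
    -- set up the K-algebra structures via the twisted map
    letI : Algebra K Rt := jmap.toAlgebra
    letI : Algebra K (Rt ⧸ J) := Ideal.Quotient.algebra K
    -- the ring hom A → Rt ⧸ J
    have hΘJ : ∀ g ∈ RingHom.ker f.toRingHom, Ideal.Quotient.mk J (Θ g) = 0 := by
      intro g hg
      rw [Ideal.Quotient.eq_zero_iff_mem]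
      exact Ideal.mem_map_of_mem _ hg
    set e := RingHom.quotientKerEquivOfSurjective (f := f.toRingHom)
      (by exact hfsurj) with he
    set ψ : A →+* Rt ⧸ J :=
      (Ideal.Quotient.lift (RingHom.ker f.toRingHom) ((Ideal.Quotient.mk J).comp Θ)
        (fun g hg => by simpa using hΘJ g hg)).comp (e.symm : A →+* _) with hψ
    have hψf : ∀ g : MvPolynomial (Fin n) K, ψ (f g) = Ideal.Quotient.mk J (Θ g) := by
      intro g
      have hes : e.symm (f g) = Ideal.Quotient.mk (RingHom.ker f.toRingHom) g := by
        apply e.injective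
        rw [e.apply_symm_apply]
        exact (RingHom.kerLift_mk f.toRingHom g).symm
      rw [hψ]
      simp only [RingHom.comp_apply, RingEquiv.coe_toRingHom]
      rw [hes, Ideal.Quotient.lift_mk]
      rfl
    -- lift using formal smoothness
    set ybar : A →ₐ[K] Rt ⧸ J :=
      { toRingHom := ψ
        commutes' := fun c => by
          have h3 : algebraMap K A c = f (MvPolynomial.C c) := (f.commutes c).symm
          have h4 : Θ (MvPolynomial.C c) = jmap c := by simp [hΘ]
          show ψ (algebraMap K A c) = algebraMap K (Rt ⧸ J) c
          rw [h3, hψf, h4]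
          rfl } with hybar
    set y' : A →ₐ[K] Rt := Algebra.FormallySmooth.lift J hJnil ybar with hy'
    refine ⟨y'.toRingHom, ?_⟩
    intro a
    obtain ⟨g, hg⟩ := hfsurj a
    have hmk : Ideal.Quotient.mk J (y' a) = Ideal.Quotient.mk J (Θ g) := by
      rw [hy', Algebra.FormallySmooth.mk_lift J hJnil ybar a]
      rw [show ybar a = ψ a from rfl, ← hg, hψf]
    have hsub : y' a - Θ g ∈ J := by
      rwa [← Ideal.Quotient.mk_eq_mk_iff_sub_mem]
    have hxu : (y' a : Rt) = Θ g + (y' a - Θ g) := by ring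
    have hθp : (Θ g) ^ p = algebraMap R Rt (h a) := by
      have := RingHom.congr_fun hkey g
      simp only [RingHom.comp_apply, frobenius_def, AlgHom.toRingHom_eq_coe,
        RingHom.coe_coe] at this
      rw [this, hg]
    show (y' a) ^ p = algebraMap R Rt (h a)
    rw [hxu, add_pow_char, hθp, hpzero _ hsub, add_zero]
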